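/- Let p ≥ 3 be an odd prime and let r, s be positive integers. Then N⁺(2^r·p^s) = 2 if p = 3, r = 2 and s ∈ {1,2}; N⁺(2^r·p^s) = 1 if p = 3, r ≠ 2 and s ∈ {1,2}; N⁺(2^r·p^s) = 1 if p = 3, r = 2 and s ≥ 3; N⁺(2^r·p^s) = 1 if p ≥ 5 is a Fermat prime and s = 1; N⁺(2^r·p^s) = 1 if p = 2^r − 1 and r ≥ 3; and N⁺(2^r·p^s) = 0 in all other cases. -/

import Mathlib

/-- A pair of integers `(a, b)` is multiplicatively dependent: `ab ≠ 0` and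
there is a nonzero pair of integer exponents `(k₁, k₂)` with `a^k₁ * b^k₂ = 1`
(evaluated in `ℚ`). -/
def MultDepPair (a b : ℤ) : Prop :=
  a * b ≠ 0 ∧ ∃ k : ℤ × ℤ, k ≠ 0 ∧ (a : ℚ) ^ k.1 * (b : ℚ) ^ k.2 = 1

/-- `MSet d` is the set of multiplicatively dependent pairs `(a, b) ∈ ℤ²`
with difference `b - a = d`. -/
def MSet (d : ℤ) : Set (ℤ × ℤ) :=
  {p | MultDepPair p.1 p.2 ∧ p.2 - p.1 = d}

/-- `M d` is the number of multiplicatively dependent pairs with difference `d`. -/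
noncomputable def M (d : ℤ) : ℕ := (MSet d).ncard

/-- `g` is a perfect power: `g = a ^ k` with `a ≥ 2`, `k ≥ 2`. -/
def IsPerfectPow (g : ℕ) : Prop := ∃ a k : ℕ, 2 ≤ a ∧ 2 ≤ k ∧ g = a ^ k

/-- `Nplus d` is the number of primitive solutions `(g, x, y)` of `g^y + g^x = d`
with `g ≥ 2` not a perfect power and `y > x ≥ 1`. -/
noncomputable def Nplus (d : ℕ) : ℕ :=
  {T : ℕ × ℕ × ℕ | 2 ≤ T.1 ∧ 1 ≤ T.2.1 ∧ T.2.1 < T.2.2 ∧ ¬ IsPerfectPow T.1 ∧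
    T.1 ^ T.2.2 + T.1 ^ T.2.1 = d}.ncard

/-- `Nminus d` is the number of primitive solutions `(g, x, y)` of `g^y - g^x = d`
with `g ≥ 2` not a perfect power and `y > x ≥ 1`. -/
noncomputable def Nminus (d : ℕ) : ℕ :=
  {T : ℕ × ℕ × ℕ | 2 ≤ T.1 ∧ 1 ≤ T.2.1 ∧ T.2.1 < T.2.2 ∧ ¬ IsPerfectPow T.1 ∧
    T.1 ^ T.2.2 = T.1 ^ T.2.1 + d}.ncard

/-- A Fermat prime: a prime of the form `2^m + 1` with `m ≥ 1`. -/
def FermatPrime (p : ℕ) : Prop := p.Prime ∧ ∃ m : ℕ, 1 ≤ m ∧ p = 2 ^ m + 1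




lemma not_pp_prime {q : ℕ} (hq : q.Prime) : ¬ IsPerfectPow q := by
  rintro ⟨a, k, ha, hk, h⟩
  have ha' : a ∣ q := h ▸ dvd_pow_self a (by omega)
  have := (Nat.Prime.eq_one_or_self_of_dvd hq a ha').resolve_left (by omega)
  subst this
  have : a ^ 2 ≤ a ^ k := Nat.pow_le_pow_right (by omega) hk
  nlinarith [a.one_lt_two_pow_iff]

lemma pow_factor {q : ℕ} (hq : q.Prime) {x r A B : ℕ} (hA : ¬ q ∣ A) (hB : ¬ q ∣ B)
    (h : q ^ x * A = q ^ r * B) : x = r ∧ A = B := by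
  have hA0 : A ≠ 0 := fun h0 => hA (h0 ▸ dvd_zero q)
  have hB0 : B ≠ 0 := fun h0 => hB (h0 ▸ dvd_zero q)
  have hq0 : q ≠ 0 := hq.ne_zero
  have hfx : (q ^ x * A).factorization q = x := by
    rw [Nat.factorization_mul (pow_ne_zero _ hq0) hA0, Nat.Prime.factorization_pow hq]
    simp [Nat.factorization_eq_zero_of_not_dvd hA]
  have hfr : (q ^ r * B).factorization q = r := by
    rw [Nat.factorization_mul (pow_ne_zero _ hq0) hB0, Nat.Prime.factorization_pow hq]
    simp [Nat.factorization_eq_zero_of_not_dvd hB]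
  have hxr : x = r := by rw [← hfx, h, hfr]
  subst hxr
  exact ⟨rfl, Nat.eq_of_mul_eq_mul_left (pow_pos hq.pos _) h⟩


lemma sq_modeq {p c : ℕ} (hp3 : 3 ≤ p) (hodd : Odd p) (h : 2 ^ c ∣ p + 1 ∨ 2 ^ c ∣ p - 1) :
    1 ≡ p ^ 2 [MOD 2 ^ (c + 1)] := by
  rw [Nat.modEq_iff_dvd' (by nlinarith : 1 ≤ p ^ 2)]
  have hfac : p ^ 2 - 1 = (p + 1) * (p - 1) := by
    have := Nat.sq_sub_sq p 1
    simpa using this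
  rw [hfac, pow_succ]
  obtain ⟨m, hm⟩ := hodd
  rcases h with ⟨e, he⟩ | ⟨e, he⟩
  · rw [he]
    have h1 : p - 1 = 2 * m := by omega
    rw [h1]
    exact ⟨e * m, by ring⟩
  · rw [he]
    have h1 : p + 1 = 2 * (m + 1) := by omega
    rw [h1]
    exact ⟨(m + 1) * e, by ring⟩

lemma odd_pow_modeq {p c t : ℕ} (hp3 : 3 ≤ p) (hodd : Odd p) (hto : Odd t)
    (h : 2 ^ c ∣ p + 1 ∨ 2 ^ c ∣ p - 1) : p ≡ p ^ t [MOD 2 ^ (c + 1)] := by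
  obtain ⟨u, hu⟩ := hto
  have h2 := (sq_modeq hp3 hodd h).pow u
  calc p = p * 1 ^ u := by ring
    _ ≡ p * (p ^ 2) ^ u [MOD 2 ^ (c+1)] := Nat.ModEq.mul_left p h2
    _ = p ^ t := by rw [← pow_mul, ← pow_succ']; congr 1; omega

lemma lemA {p t r : ℕ} (hp : p.Prime) (hp3 : 3 ≤ p) (ht : 1 ≤ t) (h : p ^ t + 1 = 2 ^ r) :
    t = 1 := by
  by_contra hne
  have ht2 : 2 ≤ t := by omega
  have hodd : Odd p := hp.odd_of_ne_two (by omega)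
  have hpt9 : 9 ≤ p ^ t := by
    calc (9:ℕ) = 3 ^ 2 := rfl
      _ ≤ p ^ 2 := Nat.pow_le_pow_left hp3 2
      _ ≤ p ^ t := Nat.pow_le_pow_right (by omega) ht2
  have hplt : p < p ^ t := by
    calc p = p ^ 1 := (pow_one p).symm
      _ < p ^ t := Nat.pow_lt_pow_right (by omega) (by omega)
  rcases Nat.even_or_odd t with hte | hto
  · -- t even: p^t ≡ 1 mod 4
    obtain ⟨u, hu⟩ := hte
    have hu1 : 1 ≤ u := by omega
    have hd1 : (2:ℕ) ^ 1 ∣ p + 1 := by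
      obtain ⟨m, hm⟩ := hodd; exact ⟨m + 1, by omega⟩
    have hm4 : 1 ≡ p ^ t [MOD 2 ^ 2] := by
      have h2 := (sq_modeq hp3 hodd (Or.inl hd1)).pow u
      have h2u : 2 * u = t := by omega
      rw [one_pow, ← pow_mul, h2u] at h2
      exact h2
    have hmm : p ^ t % 4 = 1 % 4 := hm4.symm
    have hr2 : 2 ≤ r := by
      by_contra hc; interval_cases r <;> omega
    have h4 : (4:ℕ) ∣ 2 ^ r := by
      have : (2:ℕ) ^ 2 ∣ 2 ^ r := pow_dvd_pow 2 hr2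
      simpa using this
    have : (2:ℕ)^2 = 4 := by norm_num
    omega
  · -- t odd ≥ 3
    have hdvd0 : p + 1 ∣ p ^ t + 1 := by
      simpa using Odd.nat_add_dvd_pow_add_pow p 1 hto
    have hdvd : p + 1 ∣ 2 ^ r := h ▸ hdvd0
    obtain ⟨c, hc, hce⟩ := (Nat.dvd_prime_pow Nat.prime_two).mp hdvd
    have hmod : p ≡ p ^ t [MOD 2 ^ (c + 1)] := odd_pow_modeq hp3 hodd hto (Or.inl hce.symm.dvd)
    have hrc : c + 1 ≤ r := by
      have h1 : (2:ℕ) ^ c < 2 ^ r := by omega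
      have := (Nat.pow_lt_pow_iff_right (a := 2) (by omega)).mp h1
      omega
    have hdd : 2 ^ (c + 1) ∣ p ^ t + 1 := h ▸ pow_dvd_pow 2 hrc
    have hfin : 2 ^ (c + 1) ∣ p + 1 := (Nat.modEq_zero_iff_dvd).mp <| by
      calc p + 1 ≡ p ^ t + 1 [MOD 2 ^ (c+1)] := hmod.add_right 1
        _ ≡ 0 [MOD 2 ^ (c+1)] := (Nat.modEq_zero_iff_dvd).mpr hdd
    rw [hce] at hfin
    have hle := Nat.le_of_dvd (by positivity) hfin
    have hlt : (2:ℕ) ^ c < 2 ^ (c+1) := Nat.pow_lt_pow_succ one_lt_two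
    omega

lemma lemB {p t s : ℕ} (hp : p.Prime) (hp3 : 3 ≤ p) (ht : 1 ≤ t) (hs : 1 ≤ s)
    (h : 2 ^ t + 1 = p ^ s) : s = 1 ∨ (p = 3 ∧ s = 2 ∧ t = 3) := by
  rcases eq_or_lt_of_le hs with hs1 | hs2
  · exact Or.inl hs1.symm
  have hs2 : 2 ≤ s := hs2
  have hodd : Odd p := hp.odd_of_ne_two (by omega)
  have hps9 : 9 ≤ p ^ s := by
    calc (9:ℕ) = 3 ^ 2 := rfl
      _ ≤ p ^ 2 := Nat.pow_le_pow_left hp3 2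
      _ ≤ p ^ s := Nat.pow_le_pow_right (by omega) hs2
  have hplt : p < p ^ s := by
    calc p = p ^ 1 := (pow_one p).symm
      _ < p ^ s := Nat.pow_lt_pow_right (by omega) (by omega)
  have hsub : p ^ s - 1 = 2 ^ t := by omega
  rcases Nat.even_or_odd s with hse | hso
  · -- s even: (p^u-1)(p^u+1) = 2^t
    obtain ⟨u, hu⟩ := hse
    have hu1 : 1 ≤ u := by omega
    have hpu3 : 3 ≤ p ^ u := by
      calc (3:ℕ) = 3 ^ 1 := rfl
        _ ≤ p ^ u := le_trans (Nat.pow_le_pow_left hp3 1) (Nat.pow_le_pow_right (by omega) hu1)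
    have hfac : (p ^ u + 1) * (p ^ u - 1) = 2 ^ t := by
      have h1 : (p ^ u) ^ 2 - 1 = (p ^ u + 1) * (p ^ u - 1) := by
        have := Nat.sq_sub_sq (p ^ u) 1
        simpa using this
      rw [← h1, ← pow_mul]
      have : u * 2 = s := by omega
      rw [this]; omega
    have hd1 : p ^ u + 1 ∣ 2 ^ t := ⟨p ^ u - 1, hfac.symm⟩
    have hd2 : p ^ u - 1 ∣ 2 ^ t := ⟨p ^ u + 1, by rw [← hfac]; ring⟩
    obtain ⟨b, hb, hbe⟩ := (Nat.dvd_prime_pow Nat.prime_two).mp hd1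
    obtain ⟨a, ha, hae⟩ := (Nat.dvd_prime_pow Nat.prime_two).mp hd2
    -- 2^b - 2^a = 2
    have hb2 : 2 ≤ b := by
      have : 4 ≤ 2 ^ b := by omega
      by_contra hcc; interval_cases b <;> omega
    have ha1 : a = 1 := by
      by_contra hcc
      rcases Nat.lt_or_ge a 2 with h' | h'
      · interval_cases a
        · -- p^u - 1 = 1, p^u = 2
          omega
        · omega
      · -- 4 ∣ 2^a and 4 ∣ 2^b, but 2^b - 2^a = 2
        have d1 : (4:ℕ) ∣ 2 ^ a := by
          have : (2:ℕ)^2 ∣ 2^a := pow_dvd_pow 2 h'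
          simpa using this
        have d2 : (4:ℕ) ∣ 2 ^ b := by
          have : (2:ℕ)^2 ∣ 2^b := pow_dvd_pow 2 hb2
          simpa using this
        omega
    have hpu : p ^ u = 3 := by rw [ha1] at hae; omega
    have hu' : u = 1 := by
      by_contra hcc
      have : p ^ 2 ≤ p ^ u := Nat.pow_le_pow_right (by omega) (by omega)
      have : 9 ≤ p ^ u := by nlinarith
      omega
    have hp3' : p = 3 := by rw [hu'] at hpu; simpa using hpu
    have hse2 : s = 2 := by omega
    have ht3 : t = 3 := by
      have h8 : 2 ^ t = 8 := by rw [hse2, hp3'] at h; omega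
      have : (2:ℕ) ^ t = 2 ^ 3 := by omega
      exact Nat.pow_right_injective (le_refl 2) this
    exact Or.inr ⟨hp3', hse2, ht3⟩
  · -- s odd ≥ 3: p-1 ∣ 2^t
    have hdvd : p - 1 ∣ 2 ^ t := by
      have := Nat.sub_dvd_pow_sub_pow p 1 s
      simpa [hsub] using this
    obtain ⟨c, hc, hce⟩ := (Nat.dvd_prime_pow Nat.prime_two).mp hdvd
    have hc1 : 1 ≤ c := by
      have : 2 ≤ 2 ^ c := by obtain ⟨m, hm⟩ := hodd; omega
      by_contra hcc; interval_cases c <;> omega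
    have hmod : p ≡ p ^ s [MOD 2 ^ (c + 1)] := odd_pow_modeq hp3 hodd hso (Or.inr hce.symm.dvd)
    have htc : c + 1 ≤ t := by
      have h1 : (2:ℕ) ^ c < 2 ^ t := by omega
      have := (Nat.pow_lt_pow_iff_right (a := 2) (by omega)).mp h1
      omega
    have hdd : 2 ^ (c + 1) ∣ p ^ s - 1 := hsub ▸ pow_dvd_pow 2 htc
    have hone : 1 ≡ p ^ s [MOD 2 ^ (c + 1)] := (Nat.modEq_iff_dvd' (by omega)).mpr hdd
    have hfin : 2 ^ (c + 1) ∣ p - 1 := by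
      have := (Nat.modEq_iff_dvd' (by omega : 1 ≤ p)).mp (hone.trans hmod.symm)
      exact this
    rw [hce] at hfin
    have hle := Nat.le_of_dvd (by positivity) hfin
    have hlt : (2:ℕ) ^ c < 2 ^ (c+1) := Nat.pow_lt_pow_succ one_lt_two
    omega

lemma mem_iff {p r s : ℕ} (hp : p.Prime) (hp3 : 3 ≤ p) (hr : 1 ≤ r) (hs : 1 ≤ s)
    (T : ℕ × ℕ × ℕ) :
    (2 ≤ T.1 ∧ 1 ≤ T.2.1 ∧ T.2.1 < T.2.2 ∧ ¬ IsPerfectPow T.1 ∧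
      T.1 ^ T.2.2 + T.1 ^ T.2.1 = 2 ^ r * p ^ s) ↔
    ((∃ t, 1 ≤ t ∧ 2 ^ t + 1 = p ^ s ∧ T = (2, r, r + t)) ∨
      (p + 1 = 2 ^ r ∧ T = (p, s, s + 1))) := by
  obtain ⟨g, x, y⟩ := T
  simp only [Prod.mk.injEq]
  constructor
  · rintro ⟨hg, hx, hxy, hnp, heq⟩
    set t := y - x with htdef
    have ht1 : 1 ≤ t := by omega
    have hy : y = x + t := by omega
    have hfac : g ^ x * (g ^ t + 1) = 2 ^ r * p ^ s := by
      rw [← heq, hy, pow_add]; ring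
    have hgx : g ^ x ∣ 2 ^ r * p ^ s := ⟨g ^ t + 1, hfac.symm⟩
    have hgd : g ∣ 2 ^ r * p ^ s := (dvd_pow_self g (by omega : x ≠ 0)).trans hgx
    have ht0 : t ≠ 0 := by omega
    by_cases hpg : p ∣ g
    · -- g = p branch
      have h2g : ¬ 2 ∣ g := by
        intro h2g
        have hgt1 : g ^ t + 1 ∣ 2 ^ r * p ^ s := ⟨g ^ x, by rw [← hfac]; ring⟩
        have hn2 : ¬ (2 ∣ g ^ t + 1) := fun hdd =>
          (by norm_num : ¬ (2:ℕ) ∣ 1) ((Nat.dvd_add_right (dvd_pow h2g ht0)).mp hdd)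
        have hnp' : ¬ (p ∣ g ^ t + 1) := fun hdd => by
          have := Nat.le_of_dvd one_pos ((Nat.dvd_add_right (dvd_pow hpg ht0)).mp hdd)
          omega
        have hcop : Nat.Coprime (g ^ t + 1) (2 ^ r * p ^ s) :=
          Nat.Coprime.mul_right
            (((Nat.Prime.coprime_iff_not_dvd Nat.prime_two).mpr hn2).symm.pow_right r)
            (((Nat.Prime.coprime_iff_not_dvd hp).mpr hnp').symm.pow_right s)
        have := hcop.eq_one_of_dvd hgt1
        have : 2 ≤ g ^ t := by
          calc (2:ℕ) = 2 ^ 1 := rfl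
            _ ≤ g ^ t := le_trans (Nat.pow_le_pow_left hg 1) (Nat.pow_le_pow_right (by omega) ht1)
        omega
      have hcop2 : Nat.Coprime g (2 ^ r) :=
        (((Nat.Prime.coprime_iff_not_dvd Nat.prime_two).mpr h2g).symm.pow_right r)
      have hgp : g ∣ p ^ s := hcop2.dvd_of_dvd_mul_left hgd
      obtain ⟨k, hk, hke⟩ := (Nat.dvd_prime_pow hp).mp hgp
      have hk1 : k = 1 := by
        rcases Nat.lt_or_ge k 2 with h' | h'
        · interval_cases k
          · simp at hke; omega
          · rfl
        · exact absurd ⟨p, k, hp.two_le, h', hke⟩ hnp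
      have hgp' : g = p := by rw [hke, hk1, pow_one]
      subst hgp'
      have hfac' : g ^ x * (g ^ t + 1) = g ^ s * 2 ^ r := by rw [hfac]; ring
      have hA : ¬ g ∣ g ^ t + 1 := fun hdd => by
        have := Nat.le_of_dvd one_pos ((Nat.dvd_add_right (dvd_pow dvd_rfl ht0)).mp hdd)
        omega
      have hB : ¬ g ∣ 2 ^ r := fun hdd => by
        have := Nat.Prime.dvd_of_dvd_pow (p := g) hp hdd
        have := (Nat.prime_dvd_prime_iff_eq hp Nat.prime_two).mp this
        omega
      obtain ⟨hxs, hAB⟩ := pow_factor hp hA hB hfac'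
      have ht1' : t = 1 := lemA hp hp3 ht1 hAB
      exact Or.inr ⟨by rw [← hAB, ht1', pow_one], rfl, hxs, by omega⟩
    · -- g = 2 branch
      have hcop : Nat.Coprime g (p ^ s) :=
        (((Nat.Prime.coprime_iff_not_dvd hp).mpr hpg).symm.pow_right s)
      have hg2 : g ∣ 2 ^ r := hcop.dvd_of_dvd_mul_right hgd
      obtain ⟨k, hk, hke⟩ := (Nat.dvd_prime_pow Nat.prime_two).mp hg2
      have hk1 : k = 1 := by
        rcases Nat.lt_or_ge k 2 with h' | h'
        · interval_cases k
          · simp at hke; omega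
          · rfl
        · exact absurd ⟨2, k, le_refl 2, h', hke⟩ hnp
      have hgp' : g = 2 := by rw [hke, hk1, pow_one]
      subst hgp'
      have hA : ¬ (2:ℕ) ∣ 2 ^ t + 1 := fun hdd =>
        (by norm_num : ¬ (2:ℕ) ∣ 1) ((Nat.dvd_add_right (dvd_pow dvd_rfl ht0)).mp hdd)
      have hB : ¬ (2:ℕ) ∣ p ^ s := fun hdd => by
        have := Nat.Prime.dvd_of_dvd_pow (p := 2) Nat.prime_two hdd
        have := (Nat.prime_dvd_prime_iff_eq Nat.prime_two hp).mp this
        omega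
      obtain ⟨hxr, hAB⟩ := pow_factor Nat.prime_two hA hB hfac
      exact Or.inl ⟨t, ht1, hAB, rfl, hxr, by omega⟩
  · rintro (⟨t, ht1, hte, hg, hx, hy⟩ | ⟨h2r, hg, hx, hy⟩)
    · subst hg; subst hx; subst hy
      refine ⟨le_refl 2, hr, by omega, not_pp_prime Nat.prime_two, ?_⟩
      rw [pow_add, ← hte]; ring
    · subst hg; subst hx; subst hy
      refine ⟨hp.two_le, hs, by omega, not_pp_prime hp, ?_⟩
      rw [pow_succ, ← h2r]; ring

section counts
variable {p r s : ℕ} (hp : p.Prime) (hp3 : 3 ≤ p) (hr : 1 ≤ r) (hs : 1 ≤ s)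

lemma tuniq {t t0 : ℕ} (he : 2 ^ t + 1 = p ^ s) (he0 : 2 ^ t0 + 1 = p ^ s) : t = t0 := by
  have h : (2:ℕ) ^ t = 2 ^ t0 := by omega
  exact Nat.pow_right_injective (le_refl 2) h

include hp hp3 hr hs in
lemma count2 {t0 : ℕ} (ht0 : 1 ≤ t0) (he : 2 ^ t0 + 1 = p ^ s) (hm : p + 1 = 2 ^ r) :
    Nplus (2 ^ r * p ^ s) = 2 := by
  show Set.ncard _ = 2
  have hset : {T : ℕ × ℕ × ℕ | 2 ≤ T.1 ∧ 1 ≤ T.2.1 ∧ T.2.1 < T.2.2 ∧ ¬ IsPerfectPow T.1 ∧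
      T.1 ^ T.2.2 + T.1 ^ T.2.1 = 2 ^ r * p ^ s}
      = ({(2, r, r + t0), (p, s, s + 1)} : Set (ℕ × ℕ × ℕ)) := by
    ext T
    rw [Set.mem_setOf_eq, mem_iff hp hp3 hr hs, Set.mem_insert_iff, Set.mem_singleton_iff]
    constructor
    · rintro (⟨t, ht1, hte, hT⟩ | ⟨_, hT⟩)
      · exact Or.inl (by rw [hT, tuniq hte he])
      · exact Or.inr hT
    · rintro (hT | hT)
      · exact Or.inl ⟨t0, ht0, he, hT⟩
      · exact Or.inr ⟨hm, hT⟩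
  rw [hset]
  exact Set.ncard_pair (by simp; omega)

include hp hp3 hr hs in
lemma count1a {t0 : ℕ} (ht0 : 1 ≤ t0) (he : 2 ^ t0 + 1 = p ^ s) (hm : p + 1 ≠ 2 ^ r) :
    Nplus (2 ^ r * p ^ s) = 1 := by
  show Set.ncard _ = 1
  have hset : {T : ℕ × ℕ × ℕ | 2 ≤ T.1 ∧ 1 ≤ T.2.1 ∧ T.2.1 < T.2.2 ∧ ¬ IsPerfectPow T.1 ∧
      T.1 ^ T.2.2 + T.1 ^ T.2.1 = 2 ^ r * p ^ s}
      = ({(2, r, r + t0)} : Set (ℕ × ℕ × ℕ)) := by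
    ext T
    rw [Set.mem_setOf_eq, mem_iff hp hp3 hr hs, Set.mem_singleton_iff]
    constructor
    · rintro (⟨t, ht1, hte, hT⟩ | ⟨hm', _⟩)
      · exact (by rw [hT, tuniq hte he])
      · exact absurd hm' hm
    · intro hT
      exact Or.inl ⟨t0, ht0, he, hT⟩
  rw [hset, Set.ncard_singleton]

include hp hp3 hr hs in
lemma count1b (hne : ∀ t, 1 ≤ t → 2 ^ t + 1 ≠ p ^ s) (hm : p + 1 = 2 ^ r) :
    Nplus (2 ^ r * p ^ s) = 1 := by
  show Set.ncard _ = 1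
  have hset : {T : ℕ × ℕ × ℕ | 2 ≤ T.1 ∧ 1 ≤ T.2.1 ∧ T.2.1 < T.2.2 ∧ ¬ IsPerfectPow T.1 ∧
      T.1 ^ T.2.2 + T.1 ^ T.2.1 = 2 ^ r * p ^ s}
      = ({(p, s, s + 1)} : Set (ℕ × ℕ × ℕ)) := by
    ext T
    rw [Set.mem_setOf_eq, mem_iff hp hp3 hr hs, Set.mem_singleton_iff]
    constructor
    · rintro (⟨t, ht1, hte, hT⟩ | ⟨_, hT⟩)
      · exact absurd hte (hne t ht1)
      · exact hT
    · intro hT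
      exact Or.inr ⟨hm, hT⟩
  rw [hset, Set.ncard_singleton]

include hp hp3 hr hs in
lemma count0 (hne : ∀ t, 1 ≤ t → 2 ^ t + 1 ≠ p ^ s) (hm : p + 1 ≠ 2 ^ r) :
    Nplus (2 ^ r * p ^ s) = 0 := by
  show Set.ncard _ = 0
  have hset : {T : ℕ × ℕ × ℕ | 2 ≤ T.1 ∧ 1 ≤ T.2.1 ∧ T.2.1 < T.2.2 ∧ ¬ IsPerfectPow T.1 ∧
      T.1 ^ T.2.2 + T.1 ^ T.2.1 = 2 ^ r * p ^ s} = (∅ : Set (ℕ × ℕ × ℕ)) := by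
    ext T
    rw [Set.mem_setOf_eq, mem_iff hp hp3 hr hs]
    simp only [Set.mem_empty_iff_false, iff_false]
    rintro (⟨t, ht1, hte, _⟩ | ⟨hm', _⟩)
    · exact hne t ht1 hte
    · exact hm hm'
  rw [hset, Set.ncard_empty]

end counts

theorem stmt9 (p r s : ℕ) (hp : p.Prime) (hp3 : 3 ≤ p) (hpodd : Odd p)
    (hr : 1 ≤ r) (hs : 1 ≤ s) :
    (p = 3 ∧ r = 2 ∧ (s = 1 ∨ s = 2) → Nplus (2 ^ r * p ^ s) = 2) ∧
    (p = 3 ∧ r ≠ 2 ∧ (s = 1 ∨ s = 2) → Nplus (2 ^ r * p ^ s) = 1) ∧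
    (p = 3 ∧ r = 2 ∧ 3 ≤ s → Nplus (2 ^ r * p ^ s) = 1) ∧
    (5 ≤ p ∧ FermatPrime p ∧ s = 1 → Nplus (2 ^ r * p ^ s) = 1) ∧
    (p + 1 = 2 ^ r ∧ 3 ≤ r → Nplus (2 ^ r * p ^ s) = 1) ∧
    (¬(p = 3 ∧ r = 2 ∧ (s = 1 ∨ s = 2)) ∧
     ¬(p = 3 ∧ r ≠ 2 ∧ (s = 1 ∨ s = 2)) ∧
     ¬(p = 3 ∧ r = 2 ∧ 3 ≤ s) ∧
     ¬(5 ≤ p ∧ FermatPrime p ∧ s = 1) ∧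
     ¬(p + 1 = 2 ^ r ∧ 3 ≤ r) → Nplus (2 ^ r * p ^ s) = 0) := by
  have hex3 : ∀ s', s' = 1 ∨ s' = 2 → ∃ t0, 1 ≤ t0 ∧ 2 ^ t0 + 1 = 3 ^ s' := by
    rintro s' (rfl | rfl)
    · exact ⟨1, le_refl 1, by norm_num⟩
    · exact ⟨3, by norm_num, by norm_num⟩
  refine ⟨?_, ?_, ?_, ?_, ?_, ?_⟩
  · rintro ⟨rfl, rfl, hs12⟩
    obtain ⟨t0, ht0, he⟩ := hex3 s hs12
    exact count2 hp hp3 hr hs ht0 he (by norm_num)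
  · rintro ⟨rfl, hrne, hs12⟩
    obtain ⟨t0, ht0, he⟩ := hex3 s hs12
    refine count1a hp hp3 hr hs ht0 he ?_
    intro hm
    have h22 : (2:ℕ) ^ 2 = 4 := by norm_num
    have h4 : (2:ℕ) ^ r = 2 ^ 2 := by omega
    exact hrne (Nat.pow_right_injective (le_refl 2) h4)
  · rintro ⟨rfl, rfl, hs3⟩
    refine count1b hp hp3 hr hs ?_ (by norm_num)
    intro t ht hte
    rcases lemB hp hp3 ht hs hte with h1 | ⟨_, h2, _⟩ <;> omega
  · rintro ⟨hp5, ⟨_, m, hm1, hme⟩, rfl⟩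
    have he : 2 ^ m + 1 = p ^ 1 := by rw [pow_one, hme]
    refine count1a hp hp3 hr hs hm1 he ?_
    intro hm
    have hm2 : 2 ≤ m := by
      by_contra hc
      interval_cases m <;> omega
    -- p + 1 = 2^m + 2 = 2^r, but 2^m+2 ≡ 2 mod 4 and 2^r ≥ 6
    have hr3 : 3 ≤ r := by
      by_contra hc
      interval_cases r <;> omega
    have d1 : (4:ℕ) ∣ 2 ^ m := by
      have : (2:ℕ) ^ 2 ∣ 2 ^ m := pow_dvd_pow 2 hm2
      simpa using this
    have d2 : (4:ℕ) ∣ 2 ^ r := by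
      have : (2:ℕ) ^ 2 ∣ 2 ^ r := pow_dvd_pow 2 (by omega)
      simpa using this
    omega
  · rintro ⟨hm, hr3⟩
    have hp7 : 7 ≤ p := by
      have : (8:ℕ) ≤ 2 ^ r := by
        calc (8:ℕ) = 2 ^ 3 := rfl
          _ ≤ 2 ^ r := Nat.pow_le_pow_right (by omega) hr3
      omega
    refine count1b hp hp3 hr hs ?_ hm
    intro t ht hte
    rcases lemB hp hp3 ht hs hte with h1 | ⟨h2, _, _⟩
    · -- s = 1 : 2^t + 1 = p = 2^r - 1
      subst h1
      rw [pow_one] at hte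
      have ht2 : ¬ 2 ≤ t := by
        intro ht2
        have d1 : (4:ℕ) ∣ 2 ^ t := by
          have : (2:ℕ) ^ 2 ∣ 2 ^ t := pow_dvd_pow 2 ht2
          simpa using this
        have d2 : (4:ℕ) ∣ 2 ^ r := by
          have : (2:ℕ) ^ 2 ∣ 2 ^ r := pow_dvd_pow 2 (by omega)
          simpa using this
        omega
      have : t = 1 := by omega
      subst this
      -- 2 + 1 = p, p = 3, contradiction with hp7
      omega
    · omega
  · rintro ⟨hn1, hn2, hn3, hn4, hn5⟩
    have hmne : p + 1 ≠ 2 ^ r := by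
      intro hm
      by_cases hp3' : p = 3
      · subst hp3'
        have h22 : (2:ℕ) ^ 2 = 4 := by norm_num
        have h4 : (2:ℕ) ^ r = 2 ^ 2 := by omega
        have : r = 2 := Nat.pow_right_injective (le_refl 2) h4
        subst this
        rcases Nat.lt_or_ge s 3 with h' | h'
        · exact hn1 ⟨rfl, rfl, by omega⟩
        · exact hn3 ⟨rfl, rfl, h'⟩
      · have hp5 : 5 ≤ p := by
          have h4 : p ≠ 4 := fun h => by rw [h] at hp; norm_num at hp
          omega
        have hr3 : 3 ≤ r := by
          by_contra hc
          interval_cases r <;> omega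
        exact hn5 ⟨hm, hr3⟩
    refine count0 hp hp3 hr hs ?_ hmne
    intro t ht hte
    rcases lemB hp hp3 ht hs hte with h1 | ⟨h2, h3, _⟩
    · subst h1
      by_cases hp3' : p = 3
      · by_cases hr2 : r = 2
        · exact hn1 ⟨hp3', hr2, Or.inl rfl⟩
        · exact hn2 ⟨hp3', hr2, Or.inl rfl⟩
      · have hp5 : 5 ≤ p := by
          have h4 : p ≠ 4 := fun h => by rw [h] at hp; norm_num at hp
          omega
        rw [pow_one] at hte
        exact hn4 ⟨hp5, ⟨hp, t, ht, hte.symm⟩, rfl⟩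
    · subst h2; subst h3
      by_cases hr2 : r = 2
      · exact hn1 ⟨rfl, hr2, Or.inr rfl⟩
      · exact hn2 ⟨rfl, hr2, Or.inr rfl⟩
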